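/- Two-dimensional ℓ^p ball moments via the Beta function: for p > 1 and k = (k₁,k₂) ∈ ℕ², ∫_{B²_p} x₁^{2k₁} x₂^{2k₂} dx = (2 / ((1 + k₁ + k₂) p)) · Β((1 + 2k₁)/p, (1 + 2k₂)/p). -/

import Mathlib

open MeasureTheory Set

lemma real_beta_integral' {a b : ℝ} (ha : 0 < a) (hb : 0 < b) :
    ∫ x in (0:ℝ)..1, x ^ (a - 1) * (1 - x) ^ (b - 1) =
      Real.Gamma a * Real.Gamma b / Real.Gamma (a + b) := by
  have h := Complex.Gamma_mul_Gamma_eq_betaIntegral (s := (a:ℂ)) (t := (b:ℂ))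
    (by simpa using ha) (by simpa using hb)
  have hB : Complex.betaIntegral (a:ℂ) (b:ℂ) =
      ((∫ x in (0:ℝ)..1, x ^ (a - 1) * (1 - x) ^ (b - 1) : ℝ) : ℂ) := by
    rw [Complex.betaIntegral, ← intervalIntegral.integral_ofReal]
    apply intervalIntegral.integral_congr
    intro x hx
    rw [uIcc_of_le (by norm_num : (0:ℝ) ≤ 1)] at hx
    simp only
    rw [Complex.ofReal_mul, Complex.ofReal_cpow hx.1, Complex.ofReal_cpow (by linarith [hx.2])]
    push_cast
    ring_nf
  rw [hB, ← Complex.ofReal_add, Complex.Gamma_ofReal, Complex.Gamma_ofReal,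
    Complex.Gamma_ofReal, ← Complex.ofReal_mul, ← Complex.ofReal_mul] at h
  have h' : Real.Gamma a * Real.Gamma b =
      Real.Gamma (a + b) * ∫ x in (0:ℝ)..1, x ^ (a - 1) * (1 - x) ^ (b - 1) := by
    exact_mod_cast h
  have hab : Real.Gamma (a + b) ≠ 0 := (Real.Gamma_pos_of_pos (by linarith)).ne'
  field_simp [hab] at h' ⊢
  linarith [h']

lemma subst_lemma' {p : ℝ} (hp : 1 < p) {q c : ℝ} (hq : 0 ≤ q) (hc : 0 < c) :
    ∫ x in (0:ℝ)..1, x ^ q * (1 - x ^ p) ^ c =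
      (1 / p) * ∫ u in (0:ℝ)..1, u ^ ((q + 1) / p - 1) * (1 - u) ^ c := by
  have hp0 : 0 < p := lt_trans one_pos hp
  have hpne : p ≠ 0 := hp0.ne'
  set s : ℝ := (q + 1) / p - 1 with hs
  have hs1 : -1 < s := by
    have : 0 < (q + 1) / p := div_pos (by linarith) hp0
    simp only [hs]; linarith
  set g : ℝ → ℝ := fun u => (1 / p) * (u ^ s * (1 - u) ^ c) with hg
  set f : ℝ → ℝ := fun x => x ^ p with hf
  have hcont1 : Continuous fun u : ℝ => (1 - u) ^ c := by
    refine continuous_iff_continuousAt.2 fun u => ?_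
    exact (Real.continuousAt_rpow_const (1 - u) c (Or.inr hc.le)).comp
      (continuous_const.sub continuous_id).continuousAt
  have hgint : IntegrableOn g (Icc (0:ℝ) 1) := by
    have h1 : IntegrableOn (fun u : ℝ => u ^ s) (Icc (0:ℝ) 1) := by
      rw [integrableOn_Icc_iff_integrableOn_Ioc]
      have := intervalIntegral.intervalIntegrable_rpow' (a := 0) (b := 1) hs1
      rwa [intervalIntegrable_iff_integrableOn_Ioc_of_le (by norm_num)] at this
    have h2 : IntegrableOn (fun u : ℝ => u ^ s * (1 - u) ^ c) (Icc (0:ℝ) 1) := by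
      rw [show (fun u : ℝ => u ^ s * (1 - u) ^ c) = fun u : ℝ => (1 - u) ^ c * u ^ s by
        funext u; ring]
      exact IntegrableOn.continuousOn_mul hcont1.continuousOn h1 isCompact_Icc
    exact h2.const_mul _
  have key : ∀ x ∈ Ioc (0:ℝ) 1, (p * x ^ (p - 1)) • (g ∘ f) x = x ^ q * (1 - x ^ p) ^ c := by
    intro x hx
    have hx0 : 0 < x := hx.1
    simp only [hg, hf, Function.comp, smul_eq_mul]
    rw [← Real.rpow_mul hx0.le]
    have hx1 : x ^ (p - 1) * x ^ (p * s) = x ^ q := by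
      rw [← Real.rpow_add hx0]; congr 1
      have h' : p * ((q + 1) / p) = q + 1 := by
        field_simp
      rw [hs]; linarith
    rw [show p * x ^ (p - 1) * (1 / p * (x ^ (p * s) * (1 - x ^ p) ^ c)) =
      x ^ (p - 1) * x ^ (p * s) * (1 - x ^ p) ^ c * (p / p) by ring, div_self hpne, mul_one, hx1]
  have himg : f '' Ioo (0:ℝ) 1 ⊆ Ioo 0 1 := by
    rintro _ ⟨x, hx, rfl⟩
    exact ⟨Real.rpow_pos_of_pos hx.1 p, Real.rpow_lt_one hx.1.le hx.2 hp0⟩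
  have hcont2 : ContinuousOn (fun x : ℝ => x ^ q * (1 - x ^ p) ^ c) (Icc (0:ℝ) 1) := by
    refine ContinuousOn.mul ?_ ?_
    · intro x _
      exact (Real.continuousAt_rpow_const x q (Or.inr hq)).continuousWithinAt
    · intro x _
      refine ContinuousAt.continuousWithinAt ?_
      exact hcont1.continuousAt.comp (continuous_iff_continuousAt.2 fun y =>
        Real.continuousAt_rpow_const y p (Or.inr hp0.le)).continuousAt
  have hsub := intervalIntegral.integral_comp_smul_deriv''' (a := 0) (b := 1)
    (f := f) (f' := fun x => p * x ^ (p - 1)) (g := g)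
    (by
      refine (continuous_iff_continuousAt.2 fun x => ?_).continuousOn
      exact Real.continuousAt_rpow_const x p (Or.inr hp0.le))
    (by
      intro x hx
      simp only [min_def, max_def] at hx
      norm_num at hx
      exact (Real.hasDerivAt_rpow_const (Or.inl hx.1.ne')).hasDerivWithinAt)
    (by
      refine ContinuousOn.mono ?_ (by simpa using himg)
      intro u hu
      refine ContinuousAt.continuousWithinAt ?_
      exact continuousAt_const.mul
        ((Real.continuousAt_rpow_const u s (Or.inl hu.1.ne')).mul hcont1.continuousAt))
    (by
      refine hgint.mono_set ?_
      rw [uIcc_of_le (by norm_num : (0:ℝ) ≤ 1)]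
      rintro _ ⟨x, hx, rfl⟩
      exact ⟨Real.rpow_nonneg hx.1 p, Real.rpow_le_one hx.1 hx.2 hp0.le⟩)
    (by
      rw [uIcc_of_le (by norm_num : (0:ℝ) ≤ 1), integrableOn_Icc_iff_integrableOn_Ioc]
      have hint2 : IntegrableOn (fun x : ℝ => x ^ q * (1 - x ^ p) ^ c) (Ioc (0:ℝ) 1) := by
        rw [← integrableOn_Icc_iff_integrableOn_Ioc]
        exact hcont2.integrableOn_Icc
      exact hint2.congr_fun (fun x hx => (key x hx).symm) measurableSet_Ioc)
  have hf0 : f 0 = 0 := by simp only [hf]; rw [Real.zero_rpow hpne]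
  have hf1 : f 1 = 1 := by simp only [hf]; rw [Real.one_rpow]
  rw [hf0, hf1] at hsub
  rw [← intervalIntegral.integral_const_mul, ← hsub]
  apply intervalIntegral.integral_congr_ae
  filter_upwards with x hx
  rw [uIoc_of_le (by norm_num : (0:ℝ) ≤ 1)] at hx
  exact (key x hx).symm

/-- two-dimensional `ℓᵖ` ball moments via the Beta function
`Β(a,b) = Γ(a)Γ(b)/Γ(a+b)`. -/
theorem two_dim_lp_ball_moments
    (p : ℝ) (hp : 1 < p)
    (Bp : Set (Fin 2 → ℝ))
    (hBp : Bp = {x | |x 0| ^ p + |x 1| ^ p ≤ 1})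
    (k₁ k₂ : ℕ) :
    ∫ x in Bp, x 0 ^ (2 * k₁) * x 1 ^ (2 * k₂) =
      2 / ((1 + (k₁ : ℝ) + (k₂ : ℝ)) * p) *
        (Real.Gamma ((1 + 2 * (k₁ : ℝ)) / p) * Real.Gamma ((1 + 2 * (k₂ : ℝ)) / p) /
          Real.Gamma ((1 + 2 * (k₁ : ℝ)) / p + (1 + 2 * (k₂ : ℝ)) / p)) := by
  have hp0 : 0 < p := lt_trans one_pos hp
  set c : ℝ := (2 * (k₂ : ℝ) + 1) / p with hc_def
  have hc : 0 < c := div_pos (by positivity) hp0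
  -- Step A : transfer to ℝ × ℝ
  have stepA : ∫ x in Bp, x 0 ^ (2 * k₁) * x 1 ^ (2 * k₂) =
      ∫ q in {q : ℝ × ℝ | |q.1| ^ p + |q.2| ^ p ≤ 1}, q.1 ^ (2 * k₁) * q.2 ^ (2 * k₂) := by
    have h := (MeasureTheory.volume_preserving_piFinTwo
      (fun _ : Fin 2 => ℝ)).setIntegral_preimage_emb
      (MeasurableEquiv.measurableEmbedding _)
      (fun q : ℝ × ℝ => q.1 ^ (2 * k₁) * q.2 ^ (2 * k₂))
      {q : ℝ × ℝ | |q.1| ^ p + |q.2| ^ p ≤ 1}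
    rw [← h, hBp]
    rfl
  -- Step B : Fubini, reducing to a 1-dimensional integral
  have stepB : ∫ q in {q : ℝ × ℝ | |q.1| ^ p + |q.2| ^ p ≤ 1},
      q.1 ^ (2 * k₁) * q.2 ^ (2 * k₂) =
      ∫ x in Icc (-1 : ℝ) 1,
        x ^ (2 * k₁) * (2 * (1 - |x| ^ p) ^ c / (2 * (k₂ : ℝ) + 1)) := by
    set S : Set (ℝ × ℝ) := {q | |q.1| ^ p + |q.2| ^ p ≤ 1} with hS
    set g : ℝ × ℝ → ℝ := fun q => q.1 ^ (2 * k₁) * q.2 ^ (2 * k₂) with hgdef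
    have habs : Continuous fun t : ℝ => |t| ^ p := by
      have h1 : Continuous fun s : ℝ => s ^ p :=
        continuous_iff_continuousAt.2 fun s => Real.continuousAt_rpow_const s p (Or.inr hp0.le)
      exact h1.comp continuous_abs
    have hSc : Continuous fun q : ℝ × ℝ => |q.1| ^ p + |q.2| ^ p :=
      (habs.comp continuous_fst).add (habs.comp continuous_snd)
    have hle1 : ∀ t : ℝ, |t| ^ p ≤ 1 → |t| ≤ 1 := by
      intro t h
      by_contra hcon
      push_neg at hcon
      have := (Real.one_lt_rpow_iff (abs_nonneg t)).2 (Or.inl ⟨hcon, hp0⟩)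
      linarith
    have hSmeas : MeasurableSet S := by
      have : IsClosed S := isClosed_le hSc continuous_const
      exact this.measurableSet
    have hScomp : IsCompact S := by
      refine (isCompact_Icc (a := ((-1 : ℝ), (-1 : ℝ))) (b := ((1:ℝ), (1:ℝ)))).of_isClosed_subset
        (isClosed_le hSc continuous_const) ?_
      rintro ⟨x, y⟩ hq
      simp only [hS, mem_setOf_eq] at hq
      have h1 : |x| ≤ 1 := hle1 x (by have := Real.rpow_nonneg (abs_nonneg y) p; linarith)
      have h2 : |y| ≤ 1 := hle1 y (by have := Real.rpow_nonneg (abs_nonneg x) p; linarith)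
      rw [abs_le] at h1 h2
      exact ⟨⟨h1.1, h2.1⟩, ⟨h1.2, h2.2⟩⟩
    have hgcont : Continuous g := (continuous_fst.pow _).mul (continuous_snd.pow _)
    have hInt : IntegrableOn g S := hgcont.continuousOn.integrableOn_compact hScomp
    rw [← MeasureTheory.integral_indicator hSmeas]
    have hIndInt : Integrable (S.indicator g) (volume.prod volume) := by
      rw [← Measure.volume_eq_prod, integrable_indicator_iff hSmeas]
      exact hInt
    rw [Measure.volume_eq_prod, integral_prod _ hIndInt]
    rw [← MeasureTheory.integral_indicator (measurableSet_Icc (a := (-1:ℝ)) (b := 1))]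
    apply MeasureTheory.integral_congr_ae
    filter_upwards with x
    by_cases hx : |x| ≤ 1
    · set r : ℝ := (1 - |x| ^ p) ^ (1 / p) with hr
      have hm : (0:ℝ) ≤ 1 - |x| ^ p := by
        have : |x| ^ p ≤ 1 := by
          calc |x| ^ p ≤ 1 ^ p := Real.rpow_le_rpow (abs_nonneg x) hx hp0.le
          _ = 1 := Real.one_rpow p
        linarith
      have hr0 : 0 ≤ r := Real.rpow_nonneg hm _
      have hrp : r ^ p = 1 - |x| ^ p := by
        rw [hr, ← Real.rpow_mul hm, one_div, inv_mul_cancel₀ hp0.ne', Real.rpow_one]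
      have hslice : ∀ y : ℝ, S.indicator g (x, y)
          = (Icc (-r) r).indicator (fun y => x ^ (2 * k₁) * y ^ (2 * k₂)) y := by
        intro y
        have hmem : (x, y) ∈ S ↔ y ∈ Icc (-r) r := by
          simp only [hS, mem_setOf_eq, mem_Icc, ← abs_le]
          constructor
          · intro h
            rw [← Real.rpow_le_rpow_iff (abs_nonneg y) hr0 hp0, hrp]
            linarith
          · intro h
            have := Real.rpow_le_rpow (abs_nonneg y) h hp0.le
            rw [hrp] at this
            linarith
        by_cases hy : (x, y) ∈ S
        · rw [indicator_of_mem hy, indicator_of_mem (hmem.1 hy)]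
        · rw [indicator_of_notMem hy, indicator_of_notMem (fun h => hy (hmem.2 h))]
      rw [indicator_of_mem (by rw [mem_Icc, ← abs_le]; exact hx)]
      simp only [hslice]
      rw [MeasureTheory.integral_indicator measurableSet_Icc,
        MeasureTheory.integral_const_mul, integral_Icc_eq_integral_Ioc,
        ← intervalIntegral.integral_of_le (by linarith : -r ≤ r), integral_pow]
      have hodd : Odd (2 * k₂ + 1) := odd_two_mul_add_one k₂
      rw [hodd.neg_pow]
      have hrr : r ^ (2 * k₂ + 1) = (1 - |x| ^ p) ^ c := by
        rw [hr, ← Real.rpow_natCast _ (2 * k₂ + 1), ← Real.rpow_mul hm, hc_def]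
        congr 1
        push_cast
        field_simp
      rw [hrr]
      push_cast
      ring
    · have hgt : 1 < |x| ^ p := by
        push_neg at hx
        exact (Real.one_lt_rpow_iff (abs_nonneg x)).2 (Or.inl ⟨hx, hp0⟩)
      have hempty : ∀ y : ℝ, S.indicator g (x, y) = 0 := by
        intro y
        apply indicator_of_notMem
        simp only [hS, mem_setOf_eq, not_le]
        have := Real.rpow_nonneg (abs_nonneg y) p
        linarith
      rw [indicator_of_notMem (by rw [mem_Icc, ← abs_le]; push_neg at hx ⊢; exact hx)]
      simp only [hempty, MeasureTheory.integral_zero]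
  -- Step C : symmetry and evaluation of the 1-dimensional integral
  set G : ℝ → ℝ := fun x => x ^ (2 * k₁) * (1 - |x| ^ p) ^ c with hG
  have habs : Continuous fun t : ℝ => |t| ^ p := by
    have h1 : Continuous fun s : ℝ => s ^ p :=
      continuous_iff_continuousAt.2 fun s => Real.continuousAt_rpow_const s p (Or.inr hp0.le)
    exact h1.comp continuous_abs
  have hGcont : Continuous G := by
    refine (continuous_pow _).mul ?_
    have hpowc : Continuous fun u : ℝ => u ^ c :=
      continuous_iff_continuousAt.2 fun u => Real.continuousAt_rpow_const u c (Or.inr hc.le)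
    exact hpowc.comp (continuous_const.sub habs)
  have stepC : ∫ x in Icc (-1 : ℝ) 1,
      x ^ (2 * k₁) * (2 * (1 - |x| ^ p) ^ c / (2 * (k₂ : ℝ) + 1)) =
      (2 / (2 * (k₂ : ℝ) + 1)) * (2 * ∫ x in (0:ℝ)..1, x ^ (2 * k₁) * (1 - x ^ p) ^ c) := by
    have h1 : ∫ x in Icc (-1 : ℝ) 1,
        x ^ (2 * k₁) * (2 * (1 - |x| ^ p) ^ c / (2 * (k₂ : ℝ) + 1)) =
        (2 / (2 * (k₂ : ℝ) + 1)) * ∫ x in (-1:ℝ)..1, G x := by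
      rw [integral_Icc_eq_integral_Ioc,
        ← intervalIntegral.integral_of_le (by norm_num : (-1:ℝ) ≤ 1),
        ← intervalIntegral.integral_const_mul]
      apply intervalIntegral.integral_congr
      intro x _
      simp only [hG]
      ring
    rw [h1]
    congr 1
    have hsplit := intervalIntegral.integral_add_adjacent_intervals
      (a := (-1:ℝ)) (b := 0) (c := 1)
      (hGcont.intervalIntegrable (μ := volume) _ _) (hGcont.intervalIntegrable (μ := volume) _ _)
    have hneg : ∫ x in (-1:ℝ)..0, G x = ∫ x in (0:ℝ)..1, G x := by
      have := intervalIntegral.integral_comp_neg (a := (0:ℝ)) (b := 1) G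
      rw [neg_zero] at this
      rw [← this]
      apply intervalIntegral.integral_congr
      intro x _
      simp only [hG, abs_neg]
      rw [Even.neg_pow (even_two_mul k₁)]
    have habsx : ∫ x in (0:ℝ)..1, G x = ∫ x in (0:ℝ)..1, x ^ (2 * k₁) * (1 - x ^ p) ^ c := by
      apply intervalIntegral.integral_congr
      intro x hx
      rw [uIcc_of_le (by norm_num : (0:ℝ) ≤ 1)] at hx
      simp only [hG]
      rw [abs_of_nonneg hx.1]
    rw [← hsplit, hneg, habsx]
    ring
  -- Step D : substitution and Beta evaluation
  set a : ℝ := (2 * (k₁ : ℝ) + 1) / p with ha_def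
  have ha : 0 < a := div_pos (by positivity) hp0
  have stepD : ∫ x in (0:ℝ)..1, x ^ (2 * k₁) * (1 - x ^ p) ^ c =
      (1 / p) * (Real.Gamma a * Real.Gamma (c + 1) / Real.Gamma (a + (c + 1))) := by
    have hrw : ∫ x in (0:ℝ)..1, x ^ (2 * k₁) * (1 - x ^ p) ^ c =
        ∫ x in (0:ℝ)..1, x ^ ((2 * (k₁ : ℝ))) * (1 - x ^ p) ^ c := by
      apply intervalIntegral.integral_congr
      intro x _
      have hxx : x ^ (2 * (k₁:ℝ)) = x ^ (2 * k₁) := by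
        rw [show (2 * (k₁:ℝ)) = (((2 * k₁ : ℕ) : ℝ)) by push_cast; ring, Real.rpow_natCast]
      simp only [hxx]
    rw [hrw, subst_lemma' hp (by positivity) hc]
    have harg : (2 * (k₁ : ℝ) + 1) / p - 1 = a - 1 := by rw [ha_def]
    have hbeta := real_beta_integral' ha (by linarith : (0:ℝ) < c + 1)
    rw [show c + 1 - 1 = c by ring] at hbeta
    rw [harg, hbeta]
  rw [stepA, stepB, stepC, stepD]
  -- Step E : Gamma algebra
  have hcne : c ≠ 0 := hc.ne'
  have hacne : a + c ≠ 0 := by positivity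
  rw [show a + (c + 1) = (a + c) + 1 by ring, Real.Gamma_add_one hacne,
    Real.Gamma_add_one hcne]
  have hA : (1 + 2 * (k₁ : ℝ)) / p = a := by rw [ha_def]; ring_nf
  have hC : (1 + 2 * (k₂ : ℝ)) / p = c := by rw [hc_def]; ring_nf
  rw [hA, hC, show a + c = a + c from rfl]
  have hD : Real.Gamma (a + c) ≠ 0 := (Real.Gamma_pos_of_pos (by positivity)).ne'
  have hk2 : (2 * (k₂ : ℝ) + 1) ≠ 0 := by positivity
  have hk12 : (1 + (k₁ : ℝ) + (k₂ : ℝ)) ≠ 0 := by positivity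
  field_simp [hc_def, ha_def]
  ring
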